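/- Let φ : ℝⁿ → ℝ be homogeneous in the 0-limit with triple (r₀, d₀, φ₀). Then for any index i, the partial primitive Φᵢ(x) = ∫₀^{xᵢ} φ(x₁,...,x_{i−1}, s, x_{i+1},...,xₙ) ds is homogeneous in the 0-limit with weight r₀, degree d₀ + r_{0,i}, and approximating function Φ_{i,0}(x) = ∫₀^{xᵢ} φ₀(x₁,...,x_{i−1}, s, x_{i+1},...,xₙ) ds. -/

import Mathlib

noncomputable def dil {n : ℕ} (r : Fin n → ℝ) (l : ℝ) (x : Fin n → ℝ) : Fin n → ℝ :=
  fun i => l ^ (r i) * x i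

open Real MeasureTheory intervalIntegral Set Filter Topology Metric

lemma dil_mul {n : ℕ} (r : Fin n → ℝ) {l m : ℝ} (hl : 0 ≤ l) (hm : 0 ≤ m) (x : Fin n → ℝ) :
    dil r l (dil r m x) = dil r (l * m) x := by
  funext j; simp only [dil, Real.mul_rpow hl hm]; ring

lemma dil_one {n : ℕ} (r : Fin n → ℝ) (x : Fin n → ℝ) : dil r 1 x = x := by
  funext j; simp [dil]

lemma dil_zero {n : ℕ} (r : Fin n → ℝ) (l : ℝ) : dil r l (0 : Fin n → ℝ) = 0 := by
  funext j; simp [dil]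

lemma dil_update {n : ℕ} (r : Fin n → ℝ) (l : ℝ) (x : Fin n → ℝ) (i : Fin n) (u : ℝ) :
    Function.update (dil r l x) i (l ^ (r i) * u) = dil r l (Function.update x i u) := by
  funext j
  rcases eq_or_ne j i with rfl | hj
  · simp [dil]
  · simp [dil, Function.update_of_ne hj]

lemma dil_continuous {n : ℕ} (r : Fin n → ℝ) (l : ℝ) : Continuous (dil r l) :=
  continuous_pi fun j => continuous_const.mul (continuous_apply j)

lemma clamp_abs {δ t u : ℝ} (hδ : 0 < δ) (hu : u ∈ Set.uIoc (max (-δ) (min δ t)) t) :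
    δ ≤ |u| := by
  set c := max (-δ) (min δ t) with hc
  rw [Set.mem_uIoc] at hu
  rcases le_or_gt t δ with ht | ht
  · rcases le_or_gt (-δ) t with ht2 | ht2
    · have hce : c = t := by rw [hc, min_eq_right ht, max_eq_right ht2]
      rw [hce] at hu
      rcases hu with ⟨h, h'⟩ | ⟨h, h'⟩ <;> linarith
    · have hce : c = -δ := by rw [hc, min_eq_right (by linarith), max_eq_left (by linarith)]
      rw [hce] at hu
      rcases hu with ⟨h, h'⟩ | ⟨h, h'⟩
      · linarith
      · rw [abs_of_nonpos (by linarith)]; linarith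
  · have hce : c = δ := by rw [hc, min_eq_left ht.le, max_eq_right (by linarith)]
    rw [hce] at hu
    rcases hu with ⟨h, h'⟩ | ⟨h, h'⟩
    · rw [abs_of_pos (by linarith)]; linarith
    · linarith

/-- `φ` is homogeneous in the 0-limit with associated triple `(r, d, φ₀)`. -/
def Homog0 {n : ℕ} (r : Fin n → ℝ) (d : ℝ) (φ φ₀ : (Fin n → ℝ) → ℝ) : Prop :=
  Continuous φ ∧ Continuous φ₀ ∧ φ₀ ≠ 0 ∧
    ∀ C : Set (Fin n → ℝ), IsCompact C → (0 : Fin n → ℝ) ∉ C →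
      ∀ ε > (0:ℝ), ∃ l₀ > (0:ℝ), ∀ x ∈ C, ∀ l : ℝ, 0 < l → l ≤ l₀ →
        |φ (dil r l x) / l ^ d - φ₀ x| ≤ ε


lemma homog0_apply_zero {n : ℕ} {r : Fin n → ℝ} (hr : ∀ j, 0 < r j) {d : ℝ} (hd : 0 < d)
    {φ φ₀ : (Fin n → ℝ) → ℝ} (h : Homog0 r d φ φ₀) (i : Fin n) : φ 0 = 0 := by
  obtain ⟨hφ, hφ₀, -, hlim⟩ := h
  set x : Fin n → ℝ := Function.update 0 i 1 with hxdef
  have hx0 : (0 : Fin n → ℝ) ∉ ({x} : Set (Fin n → ℝ)) := by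
    simp only [Set.mem_singleton_iff]
    intro hc
    have := congrFun hc i
    simp [hxdef] at this
  obtain ⟨l₀, hl₀, hb⟩ := hlim {x} isCompact_singleton hx0 1 one_pos
  have h1 : Tendsto (fun l : ℝ => dil r l x) (𝓝[>] 0) (𝓝 0) := by
    rw [tendsto_pi_nhds]
    intro j
    have hco : ContinuousAt (fun l : ℝ => l ^ (r j) * x j) 0 :=
      (Real.continuousAt_rpow_const 0 (r j) (Or.inr (hr j).le)).mul continuousAt_const
    have h0 : (0:ℝ) ^ (r j) * x j = 0 := by
      simp [Real.zero_rpow (ne_of_gt (hr j))]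
    have := hco.tendsto
    rw [h0] at this
    exact this.mono_left nhdsWithin_le_nhds
  have h2 : Tendsto (fun l : ℝ => φ (dil r l x)) (𝓝[>] 0) (𝓝 (φ 0)) :=
    (hφ.tendsto 0).comp h1
  have hmem : Set.Ioc (0:ℝ) l₀ ∈ 𝓝[>] (0:ℝ) := Ioc_mem_nhdsGT_of_mem ⟨le_refl 0, hl₀⟩
  have h3 : Tendsto (fun l : ℝ => φ (dil r l x)) (𝓝[>] 0) (𝓝 0) := by
    apply squeeze_zero_norm' (a := fun l : ℝ => l ^ d * (|φ₀ x| + 1))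
    · filter_upwards [hmem] with l hl
      have hld : 0 < l ^ d := Real.rpow_pos_of_pos hl.1 d
      have hb1 := hb x rfl l hl.1 hl.2
      have h4 : |φ (dil r l x) / l ^ d| ≤ |φ₀ x| + 1 := by
        calc |φ (dil r l x) / l ^ d|
            ≤ |φ (dil r l x) / l ^ d - φ₀ x| + |φ₀ x| := by
              have := abs_sub_abs_le_abs_sub (φ (dil r l x) / l ^ d) (φ₀ x)
              linarith [abs_nonneg (φ₀ x)]
          _ ≤ |φ₀ x| + 1 := by linarith
      have h5 : |φ (dil r l x)| = |φ (dil r l x) / l ^ d| * l ^ d := by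
        rw [abs_div, abs_of_pos hld, div_mul_cancel₀ _ (ne_of_gt hld)]
      rw [Real.norm_eq_abs, h5]
      calc |φ (dil r l x) / l ^ d| * l ^ d ≤ (|φ₀ x| + 1) * l ^ d :=
            mul_le_mul_of_nonneg_right h4 hld.le
        _ = l ^ d * (|φ₀ x| + 1) := by ring
    · have hco : ContinuousAt (fun l : ℝ => l ^ d) 0 :=
        Real.continuousAt_rpow_const 0 d (Or.inr hd.le)
      have := (hco.tendsto.mono_left (nhdsWithin_le_nhds (s := Set.Ioi (0:ℝ)))).mul_const (|φ₀ x| + 1)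
      rw [Real.zero_rpow (ne_of_gt hd), zero_mul] at this
      exact this
  exact tendsto_nhds_unique h2 h3

set_option maxHeartbeats 1000000 in
lemma homog0_bound {n : ℕ} {r : Fin n → ℝ} (hr : ∀ j, 0 < r j) {d : ℝ} (hd : 0 ≤ d)
    {φ φ₀ : (Fin n → ℝ) → ℝ} (h : Homog0 r d φ φ₀) (i : Fin n) {R : ℝ} (hR : 0 < R) :
    ∃ K > (0:ℝ), ∃ l₀ > (0:ℝ), ∀ l, 0 < l → l ≤ l₀ → ∀ y : Fin n → ℝ, ‖y‖ ≤ R →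
      |φ (dil r l y)| ≤ K * l ^ d := by
  have hzero : 0 < d → φ 0 = 0 := fun hd' => homog0_apply_zero hr hd' h i
  obtain ⟨hφ, hφ₀, hφ₀ne, hlim⟩ := h
  have hrne : ∀ j, (0:ℝ) < 2 / r j := fun j => div_pos two_pos (hr j)
  set N : (Fin n → ℝ) → ℝ := fun y => ∑ j, |y j| ^ (2 / r j) with hNdef
  have hNcont : Continuous N := by
    apply continuous_finset_sum
    intro j _
    exact (continuous_abs.comp (continuous_apply j)).rpow_const
      (fun y => Or.inr (hrne j).le)
  have hNnonneg : ∀ y, 0 ≤ N y := fun y =>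
    Finset.sum_nonneg fun j _ => Real.rpow_nonneg (abs_nonneg _) _
  set S : Set (Fin n → ℝ) := {z | N z = 1} with hSdef
  have hSc : IsCompact S := by
    have hclosed : IsClosed S := isClosed_eq hNcont continuous_const
    have hbdd : S ⊆ Metric.closedBall 0 1 := by
      intro z hz
      rw [Metric.mem_closedBall, dist_zero_right]
      rw [pi_norm_le_iff_of_nonneg zero_le_one]
      intro j
      rw [Real.norm_eq_abs]
      by_contra hc
      push_neg at hc
      have h1 : (1:ℝ) < |z j| ^ (2 / r j) :=
        (Real.one_lt_rpow_iff_of_pos (lt_trans one_pos hc)).2 (Or.inl ⟨hc, hrne j⟩)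
      have h2 : |z j| ^ (2 / r j) ≤ N z :=
        Finset.single_le_sum (f := fun k => |z k| ^ (2 / r k))
          (fun k _ => Real.rpow_nonneg (abs_nonneg _) _) (Finset.mem_univ j)
      rw [hz] at h2
      linarith
    exact (isCompact_closedBall _ _).of_isClosed_subset hclosed hbdd
  have hN0 : N 0 = 0 := by
    rw [hNdef]
    apply Finset.sum_eq_zero
    intro j _
    simp [Real.zero_rpow (ne_of_gt (hrne j))]
  have hS0 : (0 : Fin n → ℝ) ∉ S := by
    intro hc
    rw [hSdef] at hc
    rw [Set.mem_setOf_eq, hN0] at hc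
    norm_num at hc
  obtain ⟨M, hM⟩ := hSc.exists_bound_of_continuousOn hφ₀.continuousOn
  set M' := max M 0 with hM'def
  have hM'nonneg : 0 ≤ M' := le_max_right _ _
  obtain ⟨l₁, hl₁, hest⟩ := hlim S hSc hS0 1 one_pos
  set B : ℝ := ∑ j : Fin n, R ^ (2 / r j) with hBdef
  set μmax : ℝ := Real.sqrt B + 1 with hμmaxdef
  have hμmaxpos : 0 < μmax := by positivity
  set K : ℝ := (M' + 1) * μmax ^ d + |φ 0| + 1 with hKdef
  have hKaux : 0 ≤ (M' + 1) * μmax ^ d := by positivity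
  have hKpos : 0 < K := by positivity
  refine ⟨K, hKpos, l₁ / μmax, by positivity, ?_⟩
  intro l hl hll y hy
  have hld : (0:ℝ) < l ^ d := Real.rpow_pos_of_pos hl d
  rcases eq_or_ne y 0 with rfl | hy0
  · rw [dil_zero]
    rcases eq_or_lt_of_le hd with hd0 | hdpos
    · rw [← hd0, Real.rpow_zero]
      have : |φ 0| ≤ K := by rw [hKdef]; nlinarith
      linarith
    · rw [hzero hdpos]
      simp only [abs_zero]
      positivity
  · -- decompose y = dil r μ z with z ∈ S
    have hNy : 0 < N y := by
      rcases eq_or_lt_of_le (hNnonneg y) with h0 | h0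
      · exfalso
        apply hy0
        funext j
        have hterm : ∀ k ∈ Finset.univ, (0:ℝ) ≤ |y k| ^ (2 / r k) :=
          fun k _ => Real.rpow_nonneg (abs_nonneg _) _
        have h1 := (Finset.sum_eq_zero_iff_of_nonneg hterm).1 h0.symm j (Finset.mem_univ j)
        have habs : |y j| = 0 := by
          by_contra hc
          have h2 : (0:ℝ) < |y j| := lt_of_le_of_ne (abs_nonneg _) (Ne.symm hc)
          have := Real.rpow_pos_of_pos h2 (2 / r j)
          linarith
        simpa using habs
      · exact h0
    set μ : ℝ := Real.sqrt (N y) with hμdef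
    have hμpos : 0 < μ := Real.sqrt_pos.2 hNy
    have hμ2 : μ * μ = N y := Real.mul_self_sqrt (hNnonneg y)
    have hainv : (0:ℝ) < μ⁻¹ := by positivity
    set z : Fin n → ℝ := dil r μ⁻¹ y with hzdef
    have hyz : dil r μ z = y := by
      rw [hzdef, dil_mul r hμpos.le hainv.le, mul_inv_cancel₀ hμpos.ne', dil_one]
    have hzS : z ∈ S := by
      show N z = 1
      have hterm : ∀ j : Fin n, |z j| ^ (2 / r j) = (μ⁻¹ * μ⁻¹) * |y j| ^ (2 / r j) := by
        intro j
        have hz_j : z j = (μ⁻¹) ^ (r j) * y j := rfl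
        have hpos : (0:ℝ) < (μ⁻¹) ^ (r j) := Real.rpow_pos_of_pos hainv _
        have hexp : ((μ⁻¹) ^ (r j)) ^ (2 / r j) = μ⁻¹ * μ⁻¹ := by
          rw [← Real.rpow_mul hainv.le]
          have h2 : r j * (2 / r j) = 2 := by
            rw [mul_comm]
            exact div_mul_cancel₀ 2 (hr j).ne'
          rw [h2, show (2:ℝ) = ((2:ℕ):ℝ) by norm_num, Real.rpow_natCast, sq]
        rw [hz_j, abs_mul, abs_of_pos hpos, Real.mul_rpow hpos.le (abs_nonneg _), hexp]
      show (∑ j, |z j| ^ (2 / r j)) = 1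
      rw [Finset.sum_congr rfl (fun j _ => hterm j), ← Finset.mul_sum]
      have hNy' : (∑ j, |y j| ^ (2 / r j)) = N y := rfl
      rw [hNy', ← hμ2]
      field_simp
    have hμle : μ ≤ μmax := by
      have hNyB : N y ≤ B := by
        apply Finset.sum_le_sum
        intro j _
        apply Real.rpow_le_rpow (abs_nonneg _) _ (hrne j).le
        calc |y j| = ‖y j‖ := (Real.norm_eq_abs _).symm
          _ ≤ ‖y‖ := norm_le_pi_norm y j
          _ ≤ R := hy
      calc μ ≤ Real.sqrt B := Real.sqrt_le_sqrt hNyB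
        _ ≤ μmax := by rw [hμmaxdef]; linarith
    have hlμpos : 0 < l * μ := mul_pos hl hμpos
    have hlμle : l * μ ≤ l₁ := by
      calc l * μ ≤ (l₁ / μmax) * μmax :=
            mul_le_mul hll hμle hμpos.le (by positivity)
        _ = l₁ := div_mul_cancel₀ _ hμmaxpos.ne'
    have hb := hest z hzS (l * μ) hlμpos hlμle
    have hP : (0:ℝ) < (l * μ) ^ d := Real.rpow_pos_of_pos hlμpos d
    have heq : φ (dil r l y) = φ (dil r (l * μ) z) := by
      rw [← hyz, dil_mul r hl.le hμpos.le]
    have h4 : |φ (dil r (l * μ) z) / (l * μ) ^ d| ≤ M' + 1 := by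
      have h5 : |φ₀ z| ≤ M' :=
        le_trans (by simpa [Real.norm_eq_abs] using hM z hzS) (le_max_left _ _)
      calc |φ (dil r (l * μ) z) / (l * μ) ^ d|
          ≤ |φ (dil r (l * μ) z) / (l * μ) ^ d - φ₀ z| + |φ₀ z| := by
            have := abs_sub_abs_le_abs_sub (φ (dil r (l * μ) z) / (l * μ) ^ d) (φ₀ z)
            linarith [abs_nonneg (φ₀ z)]
        _ ≤ M' + 1 := by linarith
    have h6 : |φ (dil r (l * μ) z)| ≤ (M' + 1) * ((l * μ) ^ d) := by
      have h7 : |φ (dil r (l * μ) z)| = |φ (dil r (l * μ) z) / (l * μ) ^ d| * (l * μ) ^ d := by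
        rw [abs_div, abs_of_pos hP, div_mul_cancel₀ _ hP.ne']
      rw [h7]
      exact mul_le_mul_of_nonneg_right h4 hP.le
    rw [heq]
    calc |φ (dil r (l * μ) z)| ≤ (M' + 1) * ((l * μ) ^ d) := h6
      _ = (M' + 1) * (μ ^ d * l ^ d) := by
          rw [Real.mul_rpow hl.le hμpos.le]; ring
      _ ≤ (M' + 1) * (μmax ^ d * l ^ d) := by
          apply mul_le_mul_of_nonneg_left _ (by positivity)
          exact mul_le_mul_of_nonneg_right (Real.rpow_le_rpow hμpos.le hμle hd) hld.le
      _ ≤ K * l ^ d := by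
          rw [← mul_assoc]
          apply mul_le_mul_of_nonneg_right _ hld.le
          rw [hKdef]
          nlinarith [abs_nonneg (φ 0)]

lemma primitive_ne_zero {n : ℕ} (ψ : (Fin n → ℝ) → ℝ) (hψ : Continuous ψ) (hne : ψ ≠ 0)
    (i : Fin n) :
    (fun x : Fin n → ℝ => ∫ s in (0:ℝ)..(x i), ψ (Function.update x i s)) ≠ 0 := by
  intro hc
  obtain ⟨x, hx⟩ : ∃ x, ψ x ≠ 0 := by
    by_contra hc'
    push_neg at hc'
    exact hne (funext hc')
  have hcont : Continuous fun s : ℝ => ψ (Function.update x i s) :=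
    hψ.comp (continuous_const.update i continuous_id)
  have hder : HasDerivAt (fun t : ℝ => ∫ s in (0:ℝ)..t, ψ (Function.update x i s))
      (ψ (Function.update x i (x i))) (x i) :=
    (hcont.integral_hasStrictDerivAt 0 (x i)).hasDerivAt
  have hzero : (fun t : ℝ => ∫ s in (0:ℝ)..t, ψ (Function.update x i s)) = fun _ => (0:ℝ) := by
    funext t
    have h1 := congrFun hc (Function.update x i t)
    simpa [Function.update_idem] using h1
  rw [hzero] at hder
  have := (hasDerivAt_const (x i) (0:ℝ)).unique hder
  rw [Function.update_eq_self] at this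
  exact hx this.symm

/-- Partial primitive of a function homogeneous in the 0-limit. -/
theorem integral_homog0 {n : ℕ} (r₀ : Fin n → ℝ) (hr₀ : ∀ j, 0 < r₀ j)
    (d₀ : ℝ) (hd₀ : 0 ≤ d₀) (φ φ₀ : (Fin n → ℝ) → ℝ)
    (h : Homog0 r₀ d₀ φ φ₀) (i : Fin n) :
    Homog0 r₀ (d₀ + r₀ i)
      (fun x => ∫ s in (0:ℝ)..(x i), φ (Function.update x i s))
      (fun x => ∫ s in (0:ℝ)..(x i), φ₀ (Function.update x i s)) := by
  obtain ⟨hφc, hφ₀c, hφ₀ne, hlim⟩ := id h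
  refine ⟨?_, ?_, ?_, ?_⟩
  · apply intervalIntegral.continuous_parametric_intervalIntegral_of_continuous
      (f := fun x s => φ (Function.update x i s)) (μ := MeasureTheory.volume)
      ?_ (continuous_apply i)
    show Continuous fun p : (Fin n → ℝ) × ℝ => φ (Function.update p.1 i p.2)
    exact hφc.comp (continuous_fst.update i continuous_snd)
  · apply intervalIntegral.continuous_parametric_intervalIntegral_of_continuous
      (f := fun x s => φ₀ (Function.update x i s)) (μ := MeasureTheory.volume)
      ?_ (continuous_apply i)
    show Continuous fun p : (Fin n → ℝ) × ℝ => φ₀ (Function.update p.1 i p.2)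
    exact hφ₀c.comp (continuous_fst.update i continuous_snd)
  · exact primitive_ne_zero φ₀ hφ₀c hφ₀ne i
  · intro C hC hC0 ε hε
    -- radius of C
    obtain ⟨Rc, hRc⟩ := hC.isBounded.subset_closedBall 0
    set R : ℝ := max Rc 1 with hRdef
    have hRpos : (0:ℝ) < R := lt_of_lt_of_le one_pos (le_max_right _ _)
    have hCR : ∀ x ∈ C, ‖x‖ ≤ R := by
      intro x hx
      have h1 := hRc hx
      rw [Metric.mem_closedBall, dist_zero_right] at h1
      exact le_trans h1 (le_max_left _ _)
    obtain ⟨K, hK, l₂, hl₂, hKb⟩ := homog0_bound hr₀ hd₀ h i (R := 2 * R) (by positivity)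
    obtain ⟨K₀, hK₀⟩ :=
      (isCompact_closedBall (0 : Fin n → ℝ) (2 * R)).exists_bound_of_continuousOn
        hφ₀c.continuousOn
    set K₀' : ℝ := max K₀ 0 with hK₀'def
    have hK₀'nonneg : (0:ℝ) ≤ K₀' := le_max_right _ _
    set δ : ℝ := min R (ε / (2 * (K + K₀' + 1))) with hδdef
    have hδpos : 0 < δ := lt_min hRpos (by positivity)
    have hδR : δ ≤ R := min_le_left _ _
    have hδε : (K + K₀') * δ ≤ ε / 2 := by
      have h1 : δ ≤ ε / (2 * (K + K₀' + 1)) := min_le_right _ _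
      have h3 : (K + K₀') * (ε / (2 * (K + K₀' + 1))) ≤ ε / 2 := by
        rw [mul_div_assoc', div_le_div_iff₀ (by positivity) (by norm_num : (0:ℝ) < 2)]
        nlinarith [hK.le, hK₀'nonneg, hε.le]
      exact le_trans (mul_le_mul_of_nonneg_left h1 (by positivity)) h3
    set ε' : ℝ := ε / (4 * R) with hε'def
    have hε'pos : 0 < ε' := by positivity
    set S : Set (Fin n → ℝ) :=
      ((fun p : (Fin n → ℝ) × ℝ => Function.update p.1 i p.2) '' (C ×ˢ Set.Icc (-R) R)) ∩
        {y | δ ≤ ‖y‖} with hSdef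
    have hScomp : IsCompact S :=
      ((hC.prod isCompact_Icc).image (continuous_fst.update i continuous_snd)).inter_right
        (isClosed_le continuous_const continuous_norm)
    have hS0 : (0 : Fin n → ℝ) ∉ S := by
      rintro ⟨-, h2⟩
      rw [Set.mem_setOf_eq, norm_zero] at h2
      linarith
    obtain ⟨l₁, hl₁, hSest⟩ := hlim S hScomp hS0 ε' hε'pos
    refine ⟨min l₁ l₂, lt_min hl₁ hl₂, ?_⟩
    intro x hx l hl hll
    have hll₁ : l ≤ l₁ := le_trans hll (min_le_left _ _)
    have hll₂ : l ≤ l₂ := le_trans hll (min_le_right _ _)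
    have hxR : ‖x‖ ≤ R := hCR x hx
    have hxiR : |x i| ≤ R := by
      have h1 := norm_le_pi_norm x i
      rw [Real.norm_eq_abs] at h1
      linarith
    have hld : (0:ℝ) < l ^ d₀ := Real.rpow_pos_of_pos hl _
    have hlri : (0:ℝ) < l ^ (r₀ i) := Real.rpow_pos_of_pos hl _
    set c : ℝ := max (-δ) (min δ (x i)) with hcdef
    have hcδ : |c| ≤ δ := by
      rw [abs_le]
      refine ⟨le_max_left _ _, max_le (by linarith) (min_le_left _ _)⟩
    set g : ℝ → ℝ := fun u =>
      φ (dil r₀ l (Function.update x i u)) / l ^ d₀ - φ₀ (Function.update x i u) with hgdef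
    have hupdc : Continuous fun u : ℝ => Function.update x i u :=
      continuous_const.update i continuous_id
    have hg1c : Continuous fun u : ℝ => φ (dil r₀ l (Function.update x i u)) :=
      hφc.comp ((dil_continuous r₀ l).comp hupdc)
    have hg2c : Continuous fun u : ℝ => φ₀ (Function.update x i u) := hφ₀c.comp hupdc
    have hgc : Continuous g := (hg1c.div_const _).sub hg2c
    have key : (∫ s in (0:ℝ)..((dil r₀ l x) i), φ (Function.update (dil r₀ l x) i s)) /
          l ^ (d₀ + r₀ i) - (∫ s in (0:ℝ)..(x i), φ₀ (Function.update x i s)) =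
        ∫ u in (0:ℝ)..(x i), g u := by
      have hXi : (dil r₀ l x) i = l ^ (r₀ i) * x i := rfl
      have hcv := intervalIntegral.smul_integral_comp_mul_left (a := (0:ℝ)) (b := x i)
        (fun s => φ (Function.update (dil r₀ l x) i s)) (l ^ (r₀ i))
      rw [mul_zero] at hcv
      simp only [dil_update] at hcv
      rw [hXi, ← hcv, smul_eq_mul, Real.rpow_add hl, hgdef]
      rw [intervalIntegral.integral_sub ((hg1c.div_const _).intervalIntegrable _ _)
        (hg2c.intervalIntegrable _ _), intervalIntegral.integral_div]
      have harith : l ^ (r₀ i) * (∫ u in (0:ℝ)..(x i), φ (dil r₀ l (Function.update x i u))) /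
          (l ^ d₀ * l ^ (r₀ i)) =
          (∫ u in (0:ℝ)..(x i), φ (dil r₀ l (Function.update x i u))) / l ^ d₀ := by
        field_simp
      rw [harith]
    dsimp only
    rw [key, ← intervalIntegral.integral_add_adjacent_intervals
      (hgc.intervalIntegrable 0 c) (hgc.intervalIntegrable c (x i))]
    have hb1 : |∫ u in (0:ℝ)..c, g u| ≤ (K + K₀') * δ := by
      have hbound : ∀ u ∈ Set.uIoc (0:ℝ) c, ‖g u‖ ≤ K + K₀' := by
        intro u hu
        rw [Set.mem_uIoc] at hu
        have hc1 := (abs_le.1 hcδ).1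
        have hc2 := (abs_le.1 hcδ).2
        have huδ : |u| ≤ δ := by
          rw [abs_le]
          rcases hu with ⟨h1, h2⟩ | ⟨h1, h2⟩ <;> exact ⟨by linarith, by linarith⟩
        have hynorm : ‖Function.update x i u‖ ≤ 2 * R := by
          rw [pi_norm_le_iff_of_nonneg (by positivity)]
          intro j
          rcases eq_or_ne j i with rfl | hj
          · rw [Function.update_self, Real.norm_eq_abs]; linarith
          · rw [Function.update_of_ne hj]
            have h2 := norm_le_pi_norm x j
            linarith
        have hKb' := hKb l hl hll₂ (Function.update x i u) hynorm
        have hφ₀b : |φ₀ (Function.update x i u)| ≤ K₀' := by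
          have h3 := hK₀ _ (by rw [Metric.mem_closedBall, dist_zero_right]; exact hynorm)
          rw [Real.norm_eq_abs] at h3
          exact le_trans h3 (le_max_left _ _)
        have hdivb : |φ (dil r₀ l (Function.update x i u)) / l ^ d₀| ≤ K := by
          rw [abs_div, abs_of_pos hld, div_le_iff₀ hld]
          exact hKb'
        rw [Real.norm_eq_abs, hgdef]
        calc |φ (dil r₀ l (Function.update x i u)) / l ^ d₀ - φ₀ (Function.update x i u)|
            ≤ |φ (dil r₀ l (Function.update x i u)) / l ^ d₀| +
              |φ₀ (Function.update x i u)| := abs_sub _ _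
          _ ≤ K + K₀' := add_le_add hdivb hφ₀b
      have h4 := intervalIntegral.norm_integral_le_of_norm_le_const hbound
      rw [Real.norm_eq_abs, sub_zero] at h4
      calc |∫ u in (0:ℝ)..c, g u| ≤ (K + K₀') * |c| := h4
        _ ≤ (K + K₀') * δ := mul_le_mul_of_nonneg_left hcδ (by positivity)
    have hb2 : |∫ u in c..(x i), g u| ≤ ε' * (2 * R) := by
      have hbound : ∀ u ∈ Set.uIoc c (x i), ‖g u‖ ≤ ε' := by
        intro u hu
        have huδ : δ ≤ |u| := clamp_abs hδpos hu
        have hc1 := (abs_le.1 hcδ).1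
        have hc2 := (abs_le.1 hcδ).2
        have hx1 := (abs_le.1 hxiR).1
        have hx2 := (abs_le.1 hxiR).2
        have huR : |u| ≤ R := by
          rw [Set.mem_uIoc] at hu
          rw [abs_le]
          rcases hu with ⟨h1, h2⟩ | ⟨h1, h2⟩ <;> exact ⟨by linarith, by linarith⟩
        have hmem : Function.update x i u ∈ S := by
          constructor
          · exact ⟨(x, u), ⟨hx, Set.mem_Icc.2 (abs_le.1 huR)⟩, rfl⟩
          · rw [Set.mem_setOf_eq]
            calc δ ≤ |u| := huδ
              _ = ‖(Function.update x i u) i‖ := by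
                  rw [Function.update_self, Real.norm_eq_abs]
              _ ≤ ‖Function.update x i u‖ := norm_le_pi_norm _ i
        have h5 := hSest _ hmem l hl hll₁
        rw [Real.norm_eq_abs, hgdef]
        exact h5
      have h6 := intervalIntegral.norm_integral_le_of_norm_le_const hbound
      rw [Real.norm_eq_abs] at h6
      calc |∫ u in c..(x i), g u| ≤ ε' * |x i - c| := h6
        _ ≤ ε' * (2 * R) := by
            apply mul_le_mul_of_nonneg_left _ hε'pos.le
            have hc2 := abs_le.1 hcδ
            have hx2 := abs_le.1 hxiR
            rw [abs_le]
            exact ⟨by linarith [hc2.1, hc2.2, hx2.1, hx2.2, hδR],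
              by linarith [hc2.1, hc2.2, hx2.1, hx2.2, hδR]⟩
    have hεhalf : ε' * (2 * R) = ε / 2 := by
      rw [hε'def]
      field_simp
      ring
    calc |(∫ u in (0:ℝ)..c, g u) + ∫ u in c..(x i), g u|
        ≤ |∫ u in (0:ℝ)..c, g u| + |∫ u in c..(x i), g u| := abs_add_le _ _
      _ ≤ (K + K₀') * δ + ε' * (2 * R) := add_le_add hb1 hb2
      _ ≤ ε / 2 + ε / 2 := by rw [hεhalf]; exact add_le_add_left hδε _
      _ = ε := by ring
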